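/- Let G be a finite solvable group in which the centralizer C = C_G(Fit(G)) of the Fitting subgroup satisfies C ≅ Z_{p^{α₁}} × Z_{p^{α₂}} with 1 ≤ α₁ ≤ α₂, p a prime, and the index |G : C| is a prime. Then sd(G) ≥ g(p, α₁, α₂) / (2 · |L(G)|²), where g(p, α₁, α₂) = (1/(p − 1)⁴) · [ (α₂ − α₁ + 1)p^{α₁+2} − (α₂ − α₁ − 1)p^{α₁+1} − (α₁ + α₂ + 3)p + (α₁ + α₂ + 1) ]² + 4. -/

import Mathlib

open scoped Pointwise

/-- Two subgroups `X`, `Y` permute if `XY = YX` as sets. -/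
def Permutes {G : Type*} [Group G] (X Y : Subgroup G) : Prop :=
  (X : Set G) * (Y : Set G) = (Y : Set G) * (X : Set G)

/-- A subgroup `H` of `G` is subnormal if there is a finite chain
`H = H₀ ⊴ H₁ ⊴ … ⊴ Hₙ = G` with each term normal in the next. -/
def Subnormal {G : Type*} [Group G] (H : Subgroup G) : Prop :=
  ∃ n : ℕ, ∃ c : ℕ → Subgroup G, c 0 = H ∧ c n = ⊤ ∧
    ∀ i < n, c i ≤ c (i + 1) ∧ ((c i).subgroupOf (c (i + 1))).Normal

/-- The subgroup S-commutativity degree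
`spd(G) = |{(X,Y) ∈ sn(G) × M(G) : XY = YX}| / (|sn(G)|·|M(G)|)`;
maximal subgroups of `G` are exactly the coatoms of its subgroup lattice. -/
noncomputable def spd (G : Type*) [Group G] : ℝ :=
  (Nat.card {q : Subgroup G × Subgroup G //
      Subnormal q.1 ∧ IsCoatom q.2 ∧ Permutes q.1 q.2} : ℝ) /
    ((Nat.card {H : Subgroup G // Subnormal H} : ℝ) *
      (Nat.card {H : Subgroup G // IsCoatom H} : ℝ))

/-- The subgroup commutativity degree
`sd(G) = |{(X,Y) ∈ L(G)² : XY = YX}| / |L(G)|²`. -/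
noncomputable def sd (G : Type*) [Group G] : ℝ :=
  (Nat.card {q : Subgroup G × Subgroup G // Permutes q.1 q.2} : ℝ) /
    (Nat.card (Subgroup G) : ℝ) ^ 2

/-- The Fitting subgroup: the subgroup generated by all nilpotent normal subgroups. -/
def FittingSubgroup (G : Type*) [Group G] : Subgroup G :=
  ⨆ (H : Subgroup G) (_ : H.Normal ∧ Group.IsNilpotent ↥H), H

/-- The centralizer `C_G(Fit(G))` of the Fitting subgroup. -/
def FitCentralizer (G : Type*) [Group G] : Subgroup G :=
  Subgroup.centralizer (FittingSubgroup G : Set G)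

/-! ### Auxiliary counting lemmas -/

open Finset in
private lemma S_closed (p : ℝ) (i b : ℕ) (hib : i ≤ b) :
    ∑ j ∈ range (b+1), p ^ (min i j) =
      (∑ k ∈ range i, p ^ k) + ((b + 1 - i : ℕ) : ℝ) * p ^ i := by
  rw [range_eq_Ico, ← Finset.sum_Ico_consecutive _ (Nat.zero_le i) (by omega : i ≤ b+1)]
  congr 1
  · rw [← range_eq_Ico]
    exact Finset.sum_congr rfl fun k hk => by
      rw [min_eq_right (le_of_lt (Finset.mem_range.mp hk))]
  · rw [Finset.sum_congr rfl (fun k hk => by rw [min_eq_left (Finset.mem_Ico.mp hk).1]),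
      Finset.sum_const, Nat.card_Ico]
    simp [nsmul_eq_mul]

open Finset in
private lemma double_sum (p : ℝ) : ∀ a b : ℕ, a ≤ b →
    (p - 1) ^ 2 * ∑ i ∈ range (a+1), ∑ j ∈ range (b+1), p ^ (min i j) =
      ((b : ℝ) - a + 1) * p ^ (a + 2) - ((b : ℝ) - a - 1) * p ^ (a + 1)
        - ((a : ℝ) + b + 3) * p + ((a : ℝ) + b + 1) := by
  intro a
  induction a with
  | zero =>
    intro b hb
    simp only [zero_add, range_one, sum_singleton, Nat.zero_min,
      min_eq_left (Nat.zero_le _), pow_zero]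
    rw [Finset.sum_const, card_range]
    push_cast
    ring
  | succ a ih =>
    intro b hb
    rw [Finset.sum_range_succ, mul_add, ih b (by omega), S_closed p (a+1) b hb]
    have hgeom : (p - 1) ^ 2 * ((∑ k ∈ range (a+1), p ^ k) + ((b + 1 - (a+1) : ℕ) : ℝ) * p ^ (a+1))
        = (p - 1) * (p ^ (a+1) - 1) + ((b:ℝ) - a) * p ^ (a+1) * (p-1)^2 := by
      have h1 : (p - 1) * ∑ k ∈ range (a+1), p ^ k = p ^ (a+1) - 1 := by
        rw [mul_comm, geom_sum_mul]
      have h2 : ((b + 1 - (a+1) : ℕ) : ℝ) = (b : ℝ) - a := by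
        rw [Nat.cast_sub (by omega)]
        push_cast; ring
      rw [h2, mul_add, sq (p-1), mul_assoc (p-1) (p-1), h1]
      ring
    rw [hgeom]
    push_cast
    ring

open Finset in
private lemma count_formula (p : ℕ) (a b : ℕ) (hab : a ≤ b) :
    ((p : ℝ) - 1) ^ 2 *
      ((∑ i ∈ range (a+1), ∑ j ∈ range (b+1), p ^ (min i (b - j)) : ℕ) : ℝ) =
      ((b : ℝ) - a + 1) * (p:ℝ) ^ (a + 2) - ((b : ℝ) - a - 1) * (p:ℝ) ^ (a + 1)
        - ((a : ℝ) + b + 3) * (p:ℝ) + ((a : ℝ) + b + 1) := by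
  have hrefl : ∀ i : ℕ, ∑ j ∈ range (b+1), (p:ℝ) ^ (min i (b - j))
      = ∑ j ∈ range (b+1), (p:ℝ) ^ (min i j) := by
    intro i
    have := Finset.sum_range_reflect (fun j => (p:ℝ) ^ (min i j)) (b+1)
    simpa using this
  push_cast
  rw [Finset.sum_congr rfl fun i _ => hrefl i]
  exact double_sum (p:ℝ) a b hab

/-! ### A family of distinct submodules of `ZMod (p^a) × ZMod (p^b)` -/

private def sub (p a b i j c : ℕ) : Submodule ℤ (ZMod (p ^ a) × ZMod (p ^ b)) :=
  Submodule.span ℤ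
    {((((p : ℤ) ^ (a - i) : ℤ) : ZMod (p ^ a)),
       (((c : ℤ) * (p : ℤ) ^ (b - j - min i (b - j)) : ℤ) : ZMod (p ^ b))),
     ((0 : ZMod (p ^ a)), (((p : ℤ) ^ (b - j) : ℤ) : ZMod (p ^ b)))}

private lemma mem_sub {p a b i j c : ℕ} (z : ZMod (p ^ a) × ZMod (p ^ b)) :
    z ∈ sub p a b i j c ↔ ∃ u v : ℤ,
      ((u * (p : ℤ) ^ (a - i) : ℤ) : ZMod (p ^ a)) = z.1 ∧
      ((u * ((c : ℤ) * (p:ℤ) ^ (b - j - min i (b - j))) + v * (p:ℤ) ^ (b - j) : ℤ) : ZMod (p ^ b)) = z.2 := by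
  rw [sub, Submodule.mem_span_pair]
  refine exists_congr fun u => exists_congr fun v => ?_
  rw [Prod.ext_iff]
  constructor <;> rintro ⟨h1, h2⟩ <;> refine ⟨?_, ?_⟩ <;>
    [(rw [← h1]); (rw [← h2]); (rw [← h1]); (rw [← h2])] <;>
    simp [Prod.fst_add, Prod.snd_add, zsmul_eq_mul]

private lemma zmod_dvd {N : ℕ} {A B : ℤ} (h : ((A : ZMod N)) = (B : ZMod N)) :
    (N : ℤ) ∣ B - A :=
  ((ZMod.intCast_eq_intCast_iff A B N).mp h).dvd

private lemma pow_dvd_le {p : ℕ} (hp : 2 ≤ p) {s t : ℕ} (h : (p:ℤ)^s ∣ (p:ℤ)^t) : s ≤ t := by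
  have h' : ((p^s : ℕ) : ℤ) ∣ ((p^t : ℕ) : ℤ) := by push_cast; exact h
  exact (Nat.pow_dvd_pow_iff_le_right hp).mp (Int.natCast_dvd_natCast.mp h')

private lemma pow_split (p : ℕ) {s t : ℕ} (h : t ≤ s) :
    (p:ℤ) ^ s = (p:ℤ) ^ t * (p:ℤ) ^ (s - t) := by
  rw [← pow_add]; congr 1; omega

private lemma sub_le_aux {p : ℕ} (hp : 2 ≤ p) {a b i j c i' j' c' : ℕ}
    (hi' : i' ≤ a) (hj' : j' ≤ b)
    (hle : sub p a b i j c ≤ sub p a b i' j' c') :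
    a - i' ≤ a - i ∧ b - j' ≤ b - j := by
  have hp0 : (p:ℤ) ≠ 0 := by positivity
  constructor
  · obtain ⟨u, v, h1, _⟩ := (mem_sub _).mp (hle (Submodule.subset_span (Set.mem_insert _ _)))
    have hd : (p:ℤ)^a ∣ (p:ℤ)^(a-i) - u * (p:ℤ)^(a-i') := by
      have h := zmod_dvd h1; push_cast at h; exact h
    have hdd : (p:ℤ)^(a-i') ∣ (p:ℤ)^(a-i) := by
      have h2 : (p:ℤ)^(a-i') ∣ (p:ℤ)^a := pow_dvd_pow _ (Nat.sub_le a i')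
      have h3 : (p:ℤ)^(a-i) = ((p:ℤ)^(a-i) - u * (p:ℤ)^(a-i')) + u * (p:ℤ)^(a-i') := by ring
      rw [h3]
      exact dvd_add (h2.trans hd) (dvd_mul_left _ u)
    exact pow_dvd_le hp hdd
  · obtain ⟨u, v, h1, h2⟩ := (mem_sub _).mp
      (hle (Submodule.subset_span (Set.mem_insert_of_mem _ rfl)))
    have h1' : ((u * (p:ℤ) ^ (a - i') : ℤ) : ZMod (p^a)) = (((0:ℤ) : ZMod (p^a))) := by
      rw [h1]; simp
    have hu0 : (p:ℤ)^a ∣ u * (p:ℤ)^(a-i') := by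
      have h := zmod_dvd h1'; push_cast at h
      rw [zero_sub, dvd_neg] at h; exact h
    have hu : (p:ℤ)^i' ∣ u := by
      rw [pow_split p hi'] at hu0
      exact (mul_dvd_mul_iff_right (pow_ne_zero _ hp0)).mp hu0
    have hd2 : (p:ℤ)^b ∣ (p:ℤ)^(b-j) -
        (u * ((c':ℤ) * (p:ℤ)^(b - j' - min i' (b - j'))) + v * (p:ℤ)^(b-j')) := by
      have h := zmod_dvd h2; push_cast at h; exact h
    have hterm : (p:ℤ)^(b-j') ∣ u * ((c':ℤ) * (p:ℤ)^(b - j' - min i' (b - j'))) := by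
      obtain ⟨t, rfl⟩ := hu
      have h4 : (p:ℤ)^i' * t * ((c':ℤ) * (p:ℤ)^(b - j' - min i' (b - j'))) =
          ((p:ℤ)^i' * (p:ℤ)^(b - j' - min i' (b - j'))) * (t * (c':ℤ)) := by ring
      rw [h4]
      refine Dvd.dvd.mul_right ?_ _
      rw [pow_split p (min_le_right i' (b - j'))]
      exact mul_dvd_mul (pow_dvd_pow _ (min_le_left i' (b - j'))) dvd_rfl
    have hfin : (p:ℤ)^(b-j') ∣ (p:ℤ)^(b-j) := by
      have h3 : (p:ℤ)^(b-j) = ((p:ℤ)^(b-j) -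
          (u * ((c':ℤ) * (p:ℤ)^(b - j' - min i' (b - j'))) + v * (p:ℤ)^(b-j')))
          + u * ((c':ℤ) * (p:ℤ)^(b - j' - min i' (b - j'))) + v * (p:ℤ)^(b-j') := by ring
      rw [h3]
      exact dvd_add (dvd_add ((pow_dvd_pow _ (Nat.sub_le b j')).trans hd2) hterm)
        (dvd_mul_left _ v)
    exact pow_dvd_le hp hfin

private lemma sub_injective {p : ℕ} (hp : 2 ≤ p) {a b i j c i' j' c' : ℕ}
    (hi : i ≤ a) (hj : j ≤ b) (hi' : i' ≤ a) (hj' : j' ≤ b)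
    (hc : c < p ^ min i (b - j)) (hc' : c' < p ^ min i' (b - j'))
    (h : sub p a b i j c = sub p a b i' j' c') : i = i' ∧ j = j' ∧ c = c' := by
  have hp0 : (p:ℤ) ≠ 0 := by positivity
  obtain ⟨ha1, hb1⟩ := sub_le_aux hp hi' hj' h.le
  obtain ⟨ha2, hb2⟩ := sub_le_aux hp hi hj h.ge
  have hii : i = i' := by omega
  have hjj : j = j' := by omega
  subst hii; subst hjj
  refine ⟨rfl, rfl, ?_⟩
  obtain ⟨u, v, e1, e2⟩ := (mem_sub _).mp (h.le (Submodule.subset_span (Set.mem_insert _ _)))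
  have hd1 : (p:ℤ)^a ∣ (p:ℤ)^(a-i) - u * (p:ℤ)^(a-i) := by
    have hh := zmod_dvd e1; push_cast at hh; exact hh
  have hu : (p:ℤ)^i ∣ 1 - u := by
    have heq : (p:ℤ)^(a-i) - u * (p:ℤ)^(a-i) = (1 - u) * (p:ℤ)^(a-i) := by ring
    rw [heq, pow_split p hi] at hd1
    exact (mul_dvd_mul_iff_right (pow_ne_zero _ hp0)).mp hd1
  have hd2 : (p:ℤ)^b ∣ ((c:ℤ) * (p:ℤ)^(b - j - min i (b - j))) -
      (u * ((c':ℤ) * (p:ℤ)^(b - j - min i (b - j))) + v * (p:ℤ)^(b-j)) := by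
    have hh := zmod_dvd e2; push_cast at hh; exact hh
  obtain ⟨t, ht⟩ := hu
  have hkey : (p:ℤ)^(b-j) ∣ ((c:ℤ) - (c':ℤ)) * (p:ℤ)^(b - j - min i (b - j)) := by
    have hs : ((c:ℤ) - (c':ℤ)) * (p:ℤ)^(b - j - min i (b - j)) =
        (((c:ℤ) * (p:ℤ)^(b - j - min i (b - j))) -
          (u * ((c':ℤ) * (p:ℤ)^(b - j - min i (b - j))) + v * (p:ℤ)^(b-j)))
        - (1 - u) * (c':ℤ) * (p:ℤ)^(b - j - min i (b - j)) + v * (p:ℤ)^(b-j) := by ring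
    rw [hs, ht]
    refine dvd_add (dvd_sub ((pow_dvd_pow _ (Nat.sub_le b j)).trans hd2) ?_) (dvd_mul_left _ v)
    have h4 : (p:ℤ)^i * t * (c':ℤ) * (p:ℤ)^(b - j - min i (b - j)) =
        ((p:ℤ)^i * (p:ℤ)^(b - j - min i (b - j))) * (t * (c':ℤ)) := by ring
    rw [h4]
    refine Dvd.dvd.mul_right ?_ _
    rw [pow_split p (min_le_right i (b - j))]
    exact mul_dvd_mul (pow_dvd_pow _ (min_le_left i (b - j))) dvd_rfl
  have hcm : (p:ℤ)^(min i (b - j)) ∣ (c:ℤ) - (c':ℤ) := by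
    rw [pow_split p (min_le_right i (b - j))] at hkey
    exact (mul_dvd_mul_iff_right (pow_ne_zero _ hp0)).mp hkey
  have habs : |(c:ℤ) - (c':ℤ)| < (p:ℤ)^(min i (b - j)) := by
    have hcz : (c:ℤ) < (p:ℤ)^(min i (b - j)) := by exact_mod_cast hc
    have hcz' : (c':ℤ) < (p:ℤ)^(min i (b - j)) := by exact_mod_cast hc'
    rw [abs_sub_lt_iff]
    constructor
    · linarith [Int.natCast_nonneg c']
    · linarith [Int.natCast_nonneg c]
  have := Int.eq_zero_of_abs_lt_dvd hcm habs
  omega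

private def Idx (p a b : ℕ) : Type :=
  Σ i : Fin (a+1), Σ j : Fin (b+1), Fin (p ^ min i.1 (b - j.1))

private instance (p a b : ℕ) : Fintype (Idx p a b) := by
  unfold Idx; infer_instance

open Finset in
private lemma card_Idx (p a b : ℕ) : Fintype.card (Idx p a b) =
    ∑ i ∈ range (a+1), ∑ j ∈ range (b+1), p ^ min i (b - j) := by
  rw [show Fintype.card (Idx p a b) =
      ∑ i : Fin (a+1), ∑ j : Fin (b+1), p ^ min i.1 (b - j.1) by
    simp [Idx, Fintype.card_sigma]]
  rw [← Fin.sum_univ_eq_sum_range (fun i => ∑ j ∈ range (b+1), p ^ min i (b - j)) (a+1)]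
  refine Finset.sum_congr rfl fun i _ => ?_
  rw [← Fin.sum_univ_eq_sum_range (fun j => p ^ min i.1 (b - j)) (b+1)]

/-! ### Bridging lemmas -/

private lemma mem_of_mem_map {G : Type*} [Group G] {C : Subgroup G} {X : Subgroup C} {x : G}
    (hx : x ∈ X.map C.subtype) : x ∈ C := by
  have := Subgroup.map_le_range C.subtype X hx
  rwa [Subgroup.range_subtype] at this

private lemma permutes_of_comm {G : Type*} [Group G] {C : Subgroup G}
    (hcomm : ∀ x ∈ C, ∀ y ∈ C, x * y = y * x) (X Y : Subgroup C) :
    Permutes (X.map C.subtype) (Y.map C.subtype) := by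
  show (_ : Set G) * _ = _
  ext z
  simp only [Set.mem_mul]
  constructor
  · rintro ⟨x, hx, y, hy, rfl⟩
    exact ⟨y, hy, x, hx, (hcomm x (mem_of_mem_map hx) y (mem_of_mem_map hy)).symm⟩
  · rintro ⟨y, hy, x, hx, rfl⟩
    exact ⟨x, hx, y, hy, (hcomm y (mem_of_mem_map hy) x (mem_of_mem_map hx)).symm⟩

private lemma card_perm_ge {G : Type*} [Group G] [Finite G] (C : Subgroup G)
    (hcomm : ∀ x ∈ C, ∀ y ∈ C, x * y = y * x) :
    Nat.card (Subgroup C) * Nat.card (Subgroup C) ≤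
      Nat.card {q : Subgroup G × Subgroup G // Permutes q.1 q.2} := by
  haveI : Finite (Subgroup G) := Finite.of_injective _ SetLike.coe_injective
  let Ψ : Subgroup C × Subgroup C → {q : Subgroup G × Subgroup G // Permutes q.1 q.2} :=
    fun XY => ⟨(XY.1.map C.subtype, XY.2.map C.subtype), permutes_of_comm hcomm _ _⟩
  have hΨ : Function.Injective Ψ := by
    intro XY XY' hh
    have h1 := congrArg (fun q => q.val.1) hh
    have h2 := congrArg (fun q => q.val.2) hh
    simp only [Ψ] at h1 h2
    exact Prod.ext (Subgroup.map_injective C.subtype_injective h1)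
      (Subgroup.map_injective C.subtype_injective h2)
  have := Nat.card_le_card_of_injective Ψ hΨ
  rwa [Nat.card_prod] at this

private lemma card_subgroup_eq {G : Type*} [Group G] (C : Subgroup G) (A B : Type*)
    [AddCommGroup A] [AddCommGroup B]
    (e : ↥C ≃* Multiplicative A × Multiplicative B) :
    Nat.card (Subgroup C) = Nat.card (Submodule ℤ (A × B)) := by
  have e₂ : ↥C ≃* Multiplicative (A × B) :=
    e.trans (MulEquiv.prodMultiplicative A B).symm
  exact Nat.card_congr
    (e₂.mapSubgroup.toEquiv.trans
      ((AddSubgroup.toSubgroup (A := A × B)).symm.toEquiv.trans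
        (AddSubgroup.toIntSubmodule (M := A × B)).toEquiv))

private lemma final_arith (p α₁ α₂ T N D : ℕ) (hp2 : 2 ≤ p)
    (hB : ((p : ℝ) - 1) ^ 2 * (T : ℝ) =
      ((α₂ : ℝ) - α₁ + 1) * (p : ℝ) ^ (α₁ + 2) -
        ((α₂ : ℝ) - α₁ - 1) * (p : ℝ) ^ (α₁ + 1) -
        ((α₁ : ℝ) + α₂ + 3) * p + ((α₁ : ℝ) + α₂ + 1))
    (hT2 : 2 ≤ T) (hN : T * T ≤ N) (hD : 0 < D) :
    ((1 / ((p : ℝ) - 1) ^ 4) *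
          (((α₂ : ℝ) - α₁ + 1) * (p : ℝ) ^ (α₁ + 2) -
            ((α₂ : ℝ) - α₁ - 1) * (p : ℝ) ^ (α₁ + 1) -
            ((α₁ : ℝ) + α₂ + 3) * p + ((α₁ : ℝ) + α₂ + 1)) ^ 2 + 4) /
        (2 * (D : ℝ) ^ 2) ≤ (N : ℝ) / (D : ℝ) ^ 2 := by
  have hp1 : ((p:ℝ) - 1) ≠ 0 := by
    have h2 : (2:ℝ) ≤ (p:ℝ) := by exact_mod_cast hp2
    linarith
  have hDpos : (0:ℝ) < (D:ℝ) := by exact_mod_cast hD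
  have hEq : (1 / ((p : ℝ) - 1) ^ 4) *
          (((α₂ : ℝ) - α₁ + 1) * (p : ℝ) ^ (α₁ + 2) -
            ((α₂ : ℝ) - α₁ - 1) * (p : ℝ) ^ (α₁ + 1) -
            ((α₁ : ℝ) + α₂ + 3) * p + ((α₁ : ℝ) + α₂ + 1)) ^ 2 + 4 = ((T:ℝ))^2 + 4 := by
    rw [← hB]
    field_simp
  rw [hEq, div_le_div_iff₀ (by positivity) (pow_pos hDpos 2)]
  have hNT : ((T:ℝ))^2 ≤ (N:ℝ) := by
    have h : ((T * T : ℕ) : ℝ) ≤ (N:ℝ) := Nat.cast_le.mpr hN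
    push_cast at h
    nlinarith [h]
  have hT2R : (2:ℝ) ≤ (T:ℝ) := by exact_mod_cast hT2
  have h4 : (4:ℝ) ≤ ((T:ℝ))^2 := by nlinarith [hT2R]
  have key : ((T:ℝ))^2 + 4 ≤ 2 * (N:ℝ) := by linarith
  calc (((T:ℝ))^2 + 4) * (D:ℝ)^2
      ≤ (2 * (N:ℝ)) * (D:ℝ)^2 := mul_le_mul_of_nonneg_right key (by positivity)
    _ = (N:ℝ) * (2 * (D:ℝ)^2) := by ring

/-- Theorem, part (ii): lower bound for `sd(G)` when `G` is solvable
and `C = C_G(Fit(G)) ≅ Z_{p^α₁} × Z_{p^α₂}` has prime index. -/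
theorem sd_lower_bound_solvable (G : Type*) [Group G] [Finite G] [Group.IsSolvable G]
    (p α₁ α₂ : ℕ) (hp : p.Prime) (hα₁ : 1 ≤ α₁) (hα₁₂ : α₁ ≤ α₂)
    (hCiso : Nonempty (↥(FitCentralizer G) ≃*
      Multiplicative (ZMod (p ^ α₁)) × Multiplicative (ZMod (p ^ α₂))))
    (hidx : (FitCentralizer G).index.Prime) :
    sd G ≥
      ((1 / ((p : ℝ) - 1) ^ 4) *
          (((α₂ : ℝ) - α₁ + 1) * (p : ℝ) ^ (α₁ + 2) -
            ((α₂ : ℝ) - α₁ - 1) * (p : ℝ) ^ (α₁ + 1) -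
            ((α₁ : ℝ) + α₂ + 3) * p + ((α₁ : ℝ) + α₂ + 1)) ^ 2 + 4) /
        (2 * (Nat.card (Subgroup G) : ℝ) ^ 2) := by
  obtain ⟨e⟩ := hCiso
  have hp2 : 2 ≤ p := hp.two_le
  have hcomm : ∀ x ∈ FitCentralizer G, ∀ y ∈ FitCentralizer G, x * y = y * x := by
    intro x hx y hy
    have h : (⟨x, hx⟩ : FitCentralizer G) * ⟨y, hy⟩ = ⟨y, hy⟩ * ⟨x, hx⟩ := by
      apply e.injective
      rw [map_mul, map_mul, mul_comm]
    exact congrArg Subtype.val h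
  let T : ℕ := ∑ i ∈ Finset.range (α₁+1), ∑ j ∈ Finset.range (α₂+1), p ^ min i (α₂ - j)
  have hTdef : T = ∑ i ∈ Finset.range (α₁+1), ∑ j ∈ Finset.range (α₂+1), p ^ min i (α₂ - j) := rfl
  haveI : NeZero (p ^ α₁) := ⟨pow_ne_zero _ hp.pos.ne'⟩
  haveI : NeZero (p ^ α₂) := ⟨pow_ne_zero _ hp.pos.ne'⟩
  haveI : Finite (Submodule ℤ (ZMod (p ^ α₁) × ZMod (p ^ α₂))) :=
    Finite.of_injective _ SetLike.coe_injective
  have hTle : T ≤ Nat.card (Submodule ℤ (ZMod (p ^ α₁) × ZMod (p ^ α₂))) := by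
    rw [hTdef, ← card_Idx p α₁ α₂, ← Nat.card_eq_fintype_card]
    refine Nat.card_le_card_of_injective
      (fun x : Idx p α₁ α₂ => sub p α₁ α₂ x.1.1 x.2.1.1 x.2.2.1) ?_
    rintro ⟨i, j, c⟩ ⟨i', j', c'⟩ hh
    obtain ⟨h1, h2, h3⟩ := sub_injective hp2
      (Nat.lt_succ_iff.mp i.isLt) (Nat.lt_succ_iff.mp j.isLt)
      (Nat.lt_succ_iff.mp i'.isLt) (Nat.lt_succ_iff.mp j'.isLt)
      c.isLt c'.isLt hh
    obtain rfl : i = i' := Fin.ext h1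
    obtain rfl : j = j' := Fin.ext h2
    obtain rfl : c = c' := Fin.ext h3
    rfl
  have hLT : T ≤ Nat.card (Subgroup (FitCentralizer G)) := by
    rw [card_subgroup_eq (FitCentralizer G) (ZMod (p ^ α₁)) (ZMod (p ^ α₂)) e]
    exact hTle
  have hN : T * T ≤ Nat.card {q : Subgroup G × Subgroup G // Permutes q.1 q.2} :=
    le_trans (Nat.mul_le_mul hLT hLT) (card_perm_ge _ hcomm)
  have hT2 : 2 ≤ T := by
    have h1 : 2 * 1 ≤ (α₁+1) * (α₂+1) :=
      Nat.mul_le_mul (by omega) (by omega)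
    have h2 : (α₁+1) * (α₂+1) = ∑ i ∈ Finset.range (α₁+1), ∑ _j ∈ Finset.range (α₂+1), 1 := by
      simp [Finset.sum_const, Finset.card_range]
    have h3 : (∑ i ∈ Finset.range (α₁+1), ∑ _j ∈ Finset.range (α₂+1), 1) ≤ T := by
      rw [hTdef]
      refine Finset.sum_le_sum fun i _ => Finset.sum_le_sum fun j _ => ?_
      exact Nat.one_le_pow _ _ hp.pos
    omega
  haveI : Finite (Subgroup G) := Finite.of_injective _ SetLike.coe_injective
  rw [ge_iff_le, sd]
  exact final_arith p α₁ α₂ T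
    (Nat.card {q : Subgroup G × Subgroup G // Permutes q.1 q.2})
    (Nat.card (Subgroup G)) hp2 (count_formula p α₁ α₂ hα₁₂) hT2 hN Nat.card_pos
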